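/- The function k(x) = (1−x)^(x−1) / x^(2x) on (0,1) is increasing on (0, (−1+√(1+4e))/(2e)) and decreasing on ((−1+√(1+4e))/(2e), 1), and satisfies k(x) < 3 for all 0 < x < 1. -/

import Mathlib

open Real Set

noncomputable def cpt : ℝ := (-1 + Real.sqrt (1 + 4 * Real.exp 1)) / (2 * Real.exp 1)

noncomputable def gfun (x : ℝ) : ℝ := (x - 1) * Real.log (1 - x) - 2 * x * Real.log x

lemma sqrt_sq_eq : Real.sqrt (1 + 4 * Real.exp 1) ^ 2 = 1 + 4 * Real.exp 1 := by
  rw [sq_sqrt]; positivity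

lemma cpt_root : Real.exp 1 * cpt ^ 2 + cpt = 1 := by
  have he : (0:ℝ) < Real.exp 1 := Real.exp_pos 1
  have hs := sqrt_sq_eq
  unfold cpt
  field_simp
  rw [mul_comm (Real.exp 1) 4]; nlinarith [hs]

lemma cpt_pos : 0 < cpt := by
  have he : (0:ℝ) < Real.exp 1 := Real.exp_pos 1
  have h1 : (1:ℝ) < Real.sqrt (1 + 4 * Real.exp 1) := by
    nlinarith [sqrt_sq_eq, Real.sqrt_nonneg (1 + 4 * Real.exp 1)]
  unfold cpt
  apply div_pos (by linarith) (by linarith)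

lemma cpt_lt_one : cpt < 1 := by
  linarith [cpt_root, mul_pos (Real.exp_pos 1) (pow_pos cpt_pos 2)]

lemma cpt_le : cpt ≤ 0.45 := by
  have he : (2.7182818283:ℝ) < Real.exp 1 := Real.exp_one_gt_d9
  have hs : Real.sqrt (1 + 4 * Real.exp 1) ≤ 1 + 0.9 * Real.exp 1 := by
    rw [show (1:ℝ) + 0.9 * Real.exp 1 = Real.sqrt ((1 + 0.9 * Real.exp 1)^2) from
      (Real.sqrt_sq (by positivity)).symm]
    apply Real.sqrt_le_sqrt
    nlinarith
  unfold cpt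
  rw [div_le_iff₀ (by positivity)]
  linarith

lemma gfun_hasDeriv {x : ℝ} (hx0 : 0 < x) (hx1 : x < 1) :
    HasDerivAt gfun (Real.log (1 - x) - 2 * Real.log x - 1) x := by
  have h1x : (1:ℝ) - x ≠ 0 := by linarith
  have hlog1 : HasDerivAt (fun y : ℝ => Real.log (1 - y)) (-(1 - x)⁻¹) x := by
    have := (Real.hasDerivAt_log h1x).comp x ((hasDerivAt_id x).const_sub 1)
    simpa [Function.comp_def] using this
  have h1 : HasDerivAt (fun y : ℝ => (y - 1) * Real.log (1 - y))
      (1 * Real.log (1 - x) + (x - 1) * (-(1 - x)⁻¹)) x :=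
    ((hasDerivAt_id x).sub_const 1).mul hlog1
  have h2 : HasDerivAt (fun y : ℝ => 2 * y * Real.log y)
      (2 * (Real.log x + 1)) x := by
    have := (Real.hasDerivAt_mul_log (ne_of_gt hx0)).const_mul 2
    simpa [mul_assoc] using this
  have h := h1.sub h2
  refine h.congr_deriv ?_
  have : (x - 1) * (-(1 - x)⁻¹) = 1 := by
    field_simp
    ring
  rw [this]; ring

lemma gfun_deriv {x : ℝ} (hx0 : 0 < x) (hx1 : x < 1) :
    deriv gfun x = Real.log (1 - x) - 2 * Real.log x - 1 :=
  (gfun_hasDeriv hx0 hx1).deriv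

lemma gfun_cont : ContinuousOn gfun (Set.Ioo 0 1) := fun x hx =>
  ((gfun_hasDeriv hx.1 hx.2).continuousAt).continuousWithinAt

lemma gderiv_pos {x : ℝ} (hx0 : 0 < x) (hxc : x < cpt) :
    0 < Real.log (1 - x) - 2 * Real.log x - 1 := by
  have he : (0:ℝ) < Real.exp 1 := Real.exp_pos 1
  have hx1 : x < 1 := lt_trans hxc cpt_lt_one
  have hq : Real.exp 1 * x ^ 2 + x < 1 := by
    nlinarith [cpt_root, mul_pos (sub_pos.2 hxc)
      (show (0:ℝ) < Real.exp 1 * (x + cpt) + 1 by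
        have := mul_pos he (show (0:ℝ) < x + cpt by linarith [cpt_pos]); linarith)]
  have hd : Real.exp 1 < (1 - x) / x ^ 2 := by
    rw [lt_div_iff₀ (by positivity)]; nlinarith
  have hl : 1 < Real.log ((1 - x) / x ^ 2) := by
    rw [Real.lt_log_iff_exp_lt (div_pos (by linarith) (by positivity))]
    simpa using hd
  rw [Real.log_div (by linarith) (by positivity), Real.log_pow] at hl
  push_cast at hl
  linarith

lemma gderiv_neg {x : ℝ} (hxc : cpt < x) (hx1 : x < 1) :
    Real.log (1 - x) - 2 * Real.log x - 1 < 0 := by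
  have he : (0:ℝ) < Real.exp 1 := Real.exp_pos 1
  have hx0 : 0 < x := lt_trans cpt_pos hxc
  have hq : 1 < Real.exp 1 * x ^ 2 + x := by
    nlinarith [cpt_root, mul_pos (sub_pos.2 hxc)
      (show (0:ℝ) < Real.exp 1 * (x + cpt) + 1 by
        have := mul_pos he (show (0:ℝ) < x + cpt by linarith [cpt_pos]); linarith)]
  have hd : (1 - x) / x ^ 2 < Real.exp 1 := by
    rw [div_lt_iff₀ (by positivity)]; nlinarith
  have hl : Real.log ((1 - x) / x ^ 2) < 1 := by
    rw [Real.log_lt_iff_lt_exp (div_pos (by linarith) (by positivity))]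
    simpa using hd
  rw [Real.log_div (by linarith) (by positivity), Real.log_pow] at hl
  push_cast at hl
  linarith

lemma gfun_mono : StrictMonoOn gfun (Set.Ioc 0 cpt) := by
  apply strictMonoOn_of_deriv_pos (convex_Ioc 0 cpt)
  · exact gfun_cont.mono (fun x hx => ⟨hx.1, lt_of_le_of_lt hx.2 cpt_lt_one⟩)
  · intro x hx
    rw [interior_Ioc] at hx
    rw [gfun_deriv hx.1 (lt_trans hx.2 cpt_lt_one)]
    exact gderiv_pos hx.1 hx.2

lemma gfun_anti : StrictAntiOn gfun (Set.Ico cpt 1) := by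
  apply strictAntiOn_of_deriv_neg (convex_Ico cpt 1)
  · exact gfun_cont.mono (fun x hx => ⟨lt_of_lt_of_le cpt_pos hx.1, hx.2⟩)
  · intro x hx
    rw [interior_Ico] at hx
    rw [gfun_deriv (lt_trans cpt_pos hx.1) hx.2]
    exact gderiv_neg hx.1 hx.2

lemma fun_eq {x : ℝ} (hx0 : 0 < x) (hx1 : x < 1) :
    (1 - x) ^ (x - 1) / x ^ (2 * x) = Real.exp (gfun x) := by
  rw [Real.rpow_def_of_pos (by linarith : (0:ℝ) < 1 - x),
    Real.rpow_def_of_pos hx0, ← Real.exp_sub]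
  unfold gfun
  ring_nf

lemma exp_bound_045 : Real.exp 0.45 < 1.65 := by
  have h1 : (0.8875:ℝ) < Real.exp (-0.1125) := by
    have := Real.add_one_lt_exp (x := (-0.1125:ℝ)) (by norm_num)
    linarith
  have h2 : Real.exp 0.1125 < 1 / 0.8875 := by
    rw [Real.exp_neg] at h1
    rw [lt_div_iff₀ (by norm_num)]
    have hp : (0:ℝ) < Real.exp 0.1125 := Real.exp_pos _
    calc Real.exp 0.1125 * 0.8875 < Real.exp 0.1125 * (Real.exp 0.1125)⁻¹ := by
          apply mul_lt_mul_of_pos_left h1 hp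
      _ = 1 := mul_inv_cancel₀ (ne_of_gt hp)
  have h3 : Real.exp 0.45 = Real.exp 0.1125 ^ (4:ℕ) := by
    rw [← Real.exp_nat_mul]; norm_num
  rw [h3]
  calc Real.exp 0.1125 ^ (4:ℕ) < (1/0.8875:ℝ) ^ (4:ℕ) := by
        apply pow_lt_pow_left₀ h2 (le_of_lt (Real.exp_pos _))
        norm_num
    _ < 1.65 := by norm_num

lemma gfun_cpt_lt : Real.exp (gfun cpt) < 3 := by
  have he : (0:ℝ) < Real.exp 1 := Real.exp_pos 1
  have hc0 := cpt_pos
  have hc1 := cpt_lt_one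
  have hroot : 1 - cpt = Real.exp 1 * cpt ^ 2 := by linarith [cpt_root]
  have hlog : Real.log (1 - cpt) = 1 + 2 * Real.log cpt := by
    rw [hroot, Real.log_mul (ne_of_gt he) (by positivity), Real.log_exp,
      Real.log_pow]
    push_cast; ring
  have hg : gfun cpt = cpt - 1 - 2 * Real.log cpt := by
    unfold gfun; rw [hlog]; ring
  rw [hg]
  have hec : Real.exp cpt < 3 * (1 - cpt) := by
    have h1 : Real.exp cpt ≤ Real.exp 0.45 := Real.exp_le_exp.2 cpt_le
    have h2 : (1.65:ℝ) ≤ 3 * (1 - cpt) := by linarith [cpt_le]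
    linarith [exp_bound_045]
  have hexp : Real.exp (cpt - 1 - 2 * Real.log cpt) = Real.exp cpt / (Real.exp 1 * cpt ^ 2) := by
    rw [show cpt - 1 - 2 * Real.log cpt = cpt - (1 + Real.log (cpt ^ 2)) by
        rw [Real.log_pow]; push_cast; ring,
      Real.exp_sub, Real.exp_add, Real.exp_log (by positivity)]
  rw [hexp, ← hroot, div_lt_iff₀ (by linarith)]
  linarith

theorem stmt_12 :
    StrictMonoOn (fun x : ℝ => (1 - x) ^ (x - 1) / x ^ (2 * x))
      (Set.Ioo 0 ((-1 + Real.sqrt (1 + 4 * Real.exp 1)) / (2 * Real.exp 1))) ∧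
    StrictAntiOn (fun x : ℝ => (1 - x) ^ (x - 1) / x ^ (2 * x))
      (Set.Ioo ((-1 + Real.sqrt (1 + 4 * Real.exp 1)) / (2 * Real.exp 1)) 1) ∧
    ∀ x ∈ Set.Ioo (0 : ℝ) 1, (1 - x) ^ (x - 1) / x ^ (2 * x) < 3 := by
  have hc : (-1 + Real.sqrt (1 + 4 * Real.exp 1)) / (2 * Real.exp 1) = cpt := rfl
  rw [hc]
  refine ⟨?_, ?_, ?_⟩
  · intro x hx y hy hxy
    have hx1 : x < 1 := lt_trans hx.2 cpt_lt_one
    have hy1 : y < 1 := lt_trans hy.2 cpt_lt_one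
    simp only
    rw [fun_eq hx.1 hx1, fun_eq hy.1 hy1, Real.exp_lt_exp]
    exact gfun_mono ⟨hx.1, le_of_lt hx.2⟩ ⟨hy.1, le_of_lt hy.2⟩ hxy
  · intro x hx y hy hxy
    have hx0 : 0 < x := lt_trans cpt_pos hx.1
    have hy0 : 0 < y := lt_trans cpt_pos hy.1
    simp only
    rw [fun_eq hx0 hx.2, fun_eq hy0 hy.2, Real.exp_lt_exp]
    exact gfun_anti ⟨le_of_lt hx.1, hx.2⟩ ⟨le_of_lt hy.1, hy.2⟩ hxy
  · intro x hx
    rw [fun_eq hx.1 hx.2]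
    rcases le_or_gt x cpt with h | h
    · have hle : gfun x ≤ gfun cpt :=
        gfun_mono.monotoneOn ⟨hx.1, h⟩ ⟨cpt_pos, le_refl _⟩ h
      calc Real.exp (gfun x) ≤ Real.exp (gfun cpt) := Real.exp_le_exp.2 hle
        _ < 3 := gfun_cpt_lt
    · have hle : gfun x ≤ gfun cpt :=
        gfun_anti.antitoneOn ⟨le_refl _, cpt_lt_one⟩ ⟨le_of_lt h, hx.2⟩ (le_of_lt h)
      calc Real.exp (gfun x) ≤ Real.exp (gfun cpt) := Real.exp_le_exp.2 hle
        _ < 3 := gfun_cpt_lt
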